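/- (Modified Kerzman–Stein identity.) Let H be a complex Hilbert space, M ⊆ H a closed subspace, S the orthogonal projection of H onto M, and C : H → H a bounded linear operator with C ∘ C = C and range(C) = M. Suppose B, A : H → H are bounded linear operators with C* − C = B + A and ‖A‖ < 1. Then S ∘ (I − A) = C + S ∘ B; consequently I − A is invertible with bounded inverse and S = (C + S ∘ B) ∘ (I − A)⁻¹. -/

import Mathlib

/-- **Modified Kerzman–Stein identity.** If `S` is the orthogonal projection
of a complex Hilbert space `H` onto a closed subspace `M`, `C` is a bounded projection of
`H` with range `M`, and `C* - C = B + A` with `‖A‖ < 1`, then `S ∘ (I - A) = C + S ∘ B`;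
consequently `I - A` is invertible with bounded inverse and
`S = (C + S ∘ B) ∘ (I - A)⁻¹`. -/
theorem statement4 {H : Type*} [NormedAddCommGroup H] [InnerProductSpace ℂ H]
    [CompleteSpace H] (M : Submodule ℂ H) [CompleteSpace M]
    (C : H →L[ℂ] H) (hidem : C.comp C = C) (hrange : LinearMap.range (C : H →ₗ[ℂ] H) = M)
    (B A : H →L[ℂ] H) (hsplit : ContinuousLinearMap.adjoint C - C = B + A)
    (hA : ‖A‖ < 1) :
    (M.subtypeL.comp M.orthogonalProjectionOnto).comp (1 - A)
        = C + (M.subtypeL.comp M.orthogonalProjectionOnto).comp B ∧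
      ∃ A' : H →L[ℂ] H,
        (1 - A).comp A' = 1 ∧ A'.comp (1 - A) = 1 ∧
        M.subtypeL.comp M.orthogonalProjectionOnto
          = (C + (M.subtypeL.comp M.orthogonalProjectionOnto).comp B).comp A' := by
  set S := M.subtypeL.comp M.orthogonalProjectionOnto with hS
  -- S ∘ C = C
  have hSC : S.comp C = C := by
    ext x
    simp only [hS, ContinuousLinearMap.comp_apply, Submodule.subtypeL_apply]
    exact Submodule.starProjection_eq_self_iff.2 (by rw [← hrange]; exact ⟨x, rfl⟩)
  -- C ∘ S = S
  have hCS : C.comp S = S := by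
    ext x
    have hmem : S x ∈ LinearMap.range (C : H →ₗ[ℂ] H) := by
      rw [hrange]
      exact (M.orthogonalProjectionOnto x).2
    obtain ⟨y, hy⟩ := hmem
    have := ContinuousLinearMap.ext_iff.1 hidem y
    simp only [ContinuousLinearMap.comp_apply] at this ⊢
    rw [← hy]; exact this
  -- S is self-adjoint
  have hSsa : ContinuousLinearMap.adjoint S = S :=
    (isSelfAdjoint_starProjection M).adjoint_eq
  -- S ∘ C* = S
  have hSCadj : S.comp (ContinuousLinearMap.adjoint C) = S := by
    have := congrArg ContinuousLinearMap.adjoint hCS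
    rwa [ContinuousLinearMap.adjoint_comp, hSsa] at this
  -- key identity
  have key : S.comp (1 - A) = C + S.comp B := by
    have h1 : S.comp (ContinuousLinearMap.adjoint C - C) = S.comp (B + A) := by rw [hsplit]
    have h2 : S * ContinuousLinearMap.adjoint C - S * C = S * B + S * A := by
      rw [← mul_sub, ← mul_add]; exact h1
    have h3 : S - C = S * B + S * A := by
      rwa [show S * ContinuousLinearMap.adjoint C = S from hSCadj,
        show S * C = C from hSC] at h2
    show S * (1 - A) = C + S * B
    rw [sub_eq_iff_eq_add] at h3
    rw [mul_sub, mul_one, sub_eq_iff_eq_add]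
    nth_rewrite 1 [h3]; abel
  refine ⟨key, ?_⟩
  let u : (H →L[ℂ] H)ˣ := Units.oneSub A hA
  have huval : (u : H →L[ℂ] H) = 1 - A := rfl
  refine ⟨↑u⁻¹, by rw [← huval]; exact u.mul_inv, by rw [← huval]; exact u.inv_mul, ?_⟩
  have key' : S * (1 - A) = C + S * B := key
  show S = (C + S * B) * ↑u⁻¹
  rw [← key']
  rw [mul_assoc, ← huval, u.mul_inv, mul_one]
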